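/- Let b be Lipschitz and bounded with flow X, and let v be a bounded vector field with unique regular Lagrangian flow Y. Suppose that for every t ∈ [0,1], (∇X_t · v)(X_{−t}(x)) = v(x) for a.e. x ∈ ℝ^d. Then for a.e. y and a.e. s ∈ [0,1], the map s ↦ X_t(Y_s(y)) is differentiable with derivative v(X_t(Y_s(y))). -/

import Mathlib

open MeasureTheory Set Filter Metric Topology



lemma ae_ftc_aux {E : Type*} [NormedAddCommGroup E] [NormedSpace ℝ E] [CompleteSpace E]
    {g : ℝ → E} (hg : LocallyIntegrable g volume) (φ : ℝ → E)
    (hφ : ∀ a c : ℝ, 0 ≤ a → a ≤ c → c ≤ 1 → φ c - φ a = ∫ r in a..c, g r) :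
    ∀ᵐ s ∂(volume.restrict (Icc (0:ℝ) 1)), HasDerivAt φ (g s) s := by
  have hIoo : ∀ᵐ s ∂(volume.restrict (Icc (0:ℝ) 1)), s ∈ Ioo (0:ℝ) 1 := by
    rw [← Measure.restrict_congr_set Ioo_ae_eq_Icc]
    exact ae_restrict_mem measurableSet_Ioo
  have hleb := IsUnifLocDoublingMeasure.ae_tendsto_average_norm_sub (μ := volume) hg 1
  filter_upwards [hIoo, ae_restrict_of_ae hleb] with s hs hlebs
  -- the averages tend to 0
  have δlim : Tendsto (fun u : ℝ => |u - s|) (𝓝[≠] s) (𝓝[>] 0) := by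
    rw [tendsto_nhdsWithin_iff]
    constructor
    · have : Tendsto (fun u : ℝ => |u - s|) (𝓝 s) (𝓝 |s - s|) :=
        ((continuous_id.sub continuous_const).abs.tendsto s)
      simpa using this.mono_left nhdsWithin_le_nhds
    · filter_upwards [self_mem_nhdsWithin] with u hu
      exact abs_pos.2 (sub_ne_zero.2 hu)
  have xmem : ∀ᶠ u : ℝ in 𝓝[≠] s, s ∈ closedBall s (1 * |u - s|) := by
    filter_upwards with u
    simp [abs_nonneg]
  have havg : Tendsto (fun u : ℝ => ⨍ r in closedBall s |u - s|, ‖g r - g s‖) (𝓝[≠] s) (𝓝 0) :=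
    hlebs (fun _ => s) (fun u => |u - s|) δlim xmem
  rw [hasDerivAt_iff_tendsto_slope, ← tendsto_sub_nhds_zero_iff]
  apply squeeze_zero_norm'
    (a := fun u : ℝ => 2 * ⨍ r in closedBall s |u - s|, ‖g r - g s‖)
  · have hIoo_mem : Ioo (0:ℝ) 1 ∈ 𝓝[≠] s :=
      nhdsWithin_le_nhds (isOpen_Ioo.mem_nhds hs)
    filter_upwards [self_mem_nhdsWithin, hIoo_mem] with u hu hu01
    have hus : u - s ≠ 0 := sub_ne_zero.2 hu
    -- key identity
    have hgint : ∀ p q : ℝ, IntervalIntegrable g volume p q := fun p q =>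
      (hg.integrableOn_isCompact isCompact_uIcc).intervalIntegrable
    have key : φ u - φ s = ∫ r in s..u, g r := by
      rcases le_total s u with h | h
      · exact hφ s u hs.1.le h hu01.2.le
      · rw [intervalIntegral.integral_symm]
        rw [← hφ u s hu01.1.le h hs.2.le]
        abel
    have key2 : φ u - φ s - (u - s) • g s = ∫ r in s..u, (g r - g s) := by
      rw [intervalIntegral.integral_sub (hgint s u) intervalIntegrable_const, key,
        intervalIntegral.integral_const]
    have hslope : slope φ s u - g s = (u - s)⁻¹ • (φ u - φ s - (u - s) • g s) := by
      have h3 : (u - s)⁻¹ • ((u - s) • g s) = g s := by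
        rw [smul_smul, inv_mul_cancel₀ hus, one_smul]
      rw [slope_def_module, smul_sub, smul_sub, h3, smul_sub]
    rw [hslope, norm_smul, norm_inv, Real.norm_eq_abs]
    have hsub : uIoc s u ⊆ closedBall s |u - s| := by
      intro r hr
      rw [Real.closedBall_eq_Icc]
      rcases le_total s u with h | h
      · rw [uIoc_of_le h] at hr
        constructor
        · have := hr.1; have h2 := abs_nonneg (u - s); nlinarith [neg_abs_le (u - s)]
        · have := hr.2; nlinarith [le_abs_self (u - s)]
      · rw [uIoc_of_ge h] at hr
        constructor
        · have := hr.1; nlinarith [neg_abs_le (u - s)]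
        · have := hr.2; nlinarith [le_abs_self (u - s), abs_nonneg (u - s)]
    have hint_cb : IntegrableOn (fun r => ‖g r - g s‖) (closedBall s |u - s|) volume :=
      ((hg.integrableOn_isCompact (isCompact_closedBall _ _)).sub
        (integrableOn_const (by
          rw [Real.volume_closedBall]; exact ENNReal.ofReal_ne_top))).norm
    have h1 : ‖φ u - φ s - (u - s) • g s‖ ≤ ∫ r in closedBall s |u - s|, ‖g r - g s‖ := by
      rw [key2]
      refine (intervalIntegral.norm_integral_le_integral_norm_uIoc).trans ?_
      exact setIntegral_mono_set hint_cb
        (Eventually.of_forall fun r => norm_nonneg _) (HasSubset.Subset.eventuallyLE hsub)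
    have hvol : (volume (closedBall s |u - s|)).toReal = 2 * |u - s| := by
      rw [Real.volume_closedBall, ENNReal.toReal_ofReal (by positivity)]
    have h2 : ∫ r in closedBall s |u - s|, ‖g r - g s‖
        = 2 * |u - s| * ⨍ r in closedBall s |u - s|, ‖g r - g s‖ := by
      rw [setAverage_eq, smul_eq_mul, ← mul_assoc, measureReal_def, hvol]
      rw [mul_inv_cancel₀ (by positivity), one_mul]
    calc |u - s|⁻¹ * ‖φ u - φ s - (u - s) • g s‖
        ≤ |u - s|⁻¹ * (2 * |u - s| * ⨍ r in closedBall s |u - s|, ‖g r - g s‖) := by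
          apply mul_le_mul_of_nonneg_left _ (by positivity)
          rw [← h2]; exact h1
      _ = 2 * ⨍ r in closedBall s |u - s|, ‖g r - g s‖ := by
          field_simp
  · simpa using havg.const_mul 2

/-- Let `b` be Lipschitz and bounded with flow `X`, and `v` bounded with
regular Lagrangian flow `Y`. If for every `t ∈ [0,1]` one has
`(∇X_t · v)(X_{−t}(x)) = v(x)` a.e. (equivalently, `∇X_t(x)·v(x) = v(X_t(x))` a.e.),
then for a.e. `y` and a.e. `s ∈ [0,1]` the map `s ↦ X_t(Y_s(y))` is differentiable
with derivative `v(X_t(Y_s(y)))`. -/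
theorem flow_image_of_integral_curves (d : ℕ) (K : NNReal) (Cb Cv C : ℝ)
    (b v : (Fin d → ℝ) → (Fin d → ℝ))
    (X : ℝ → (Fin d → ℝ) → (Fin d → ℝ)) (Y : ℝ → (Fin d → ℝ) → (Fin d → ℝ))
    (hb : LipschitzWith K b) (hbbdd : ∀ x, ‖b x‖ ≤ Cb) (hvbdd : ∀ x, ‖v x‖ ≤ Cv)
    (hvmeas : Measurable v)
    (hflow : ∀ t x, HasDerivAt (fun s => X s x) (b (X t x)) t)
    (hX0 : ∀ x, X 0 x = x)
    (hYmeas : ∀ s, Measurable (Y s))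
    (hYode : ∀ᵐ y ∂(volume : Measure (Fin d → ℝ)), Y 0 y = y ∧
      ∀ a c : ℝ, 0 ≤ a → a ≤ c → c ≤ 1 →
        Y c y - Y a y = ∫ r in a..c, v (Y r y))
    (hYpush : ∀ s ∈ Icc (0:ℝ) 1, ∀ A : Set (Fin d → ℝ), MeasurableSet A →
      volume ((Y s) ⁻¹' A) ≤ ENNReal.ofReal C * volume A)
    (hinv : ∀ t ∈ Icc (0:ℝ) 1, ∀ᵐ x ∂(volume : Measure (Fin d → ℝ)),
      DifferentiableAt ℝ (X t) x ∧ fderiv ℝ (X t) x (v x) = v (X t x)) :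
    ∀ t ∈ Icc (0:ℝ) 1, ∀ᵐ y ∂(volume : Measure (Fin d → ℝ)),
      ∀ᵐ s ∂(volume.restrict (Icc (0:ℝ) 1)),
        HasDerivAt (fun r => X t (Y r y)) (v (X t (Y s y))) s := by
  intro t ht
  classical
  have hCv0 : 0 ≤ Cv := le_trans (norm_nonneg _) (hvbdd 0)
  -- measurable null superset of the bad set of hinv
  obtain ⟨N, hNsub, hNmeas, hNnull⟩ :=
    exists_measurable_superset_of_null (ae_iff.1 (hinv t ht))
  -- measurable null superset of the bad set of hYode
  obtain ⟨M, hMsub, hMmeas, hMnull⟩ := exists_measurable_superset_of_null (ae_iff.1 hYode)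
  set G : Set (Fin d → ℝ) := Mᶜ with hGdef
  have hGmeas : MeasurableSet G := hMmeas.compl
  have hGprop : ∀ y ∈ G, Y 0 y = y ∧
      ∀ a c : ℝ, 0 ≤ a → a ≤ c → c ≤ 1 → Y c y - Y a y = ∫ r in a..c, v (Y r y) := by
    intro y hy
    by_contra h
    exact hy (hMsub h)
  have hGfull : ∀ᵐ y ∂(volume : Measure (Fin d → ℝ)), y ∈ G := by
    rw [ae_iff]
    simpa [hGdef, not_not] using hMnull
  -- projection to [0,1]
  set π : ℝ → ℝ := fun s => max (min s 1) 0 with hπdef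
  have hπlip : LipschitzWith 1 π := (LipschitzWith.id.min_const 1).max_const 0
  have hπmem : ∀ s, π s ∈ Icc (0:ℝ) 1 :=
    fun s => ⟨le_max_right _ _, max_le (min_le_right _ _) zero_le_one⟩
  have hπeq : ∀ s ∈ Icc (0:ℝ) 1, π s = s := by
    intro s hs
    simp only [hπdef]
    rw [min_eq_left hs.2, max_eq_left hs.1]
  -- modified flow, continuous in time for every y
  set Z : ℝ → (Fin d → ℝ) → (Fin d → ℝ) :=
    fun s y => if y ∈ G then Y (π s) y else y with hZdef
  have hZeq : ∀ y ∈ G, ∀ s ∈ Icc (0:ℝ) 1, Z s y = Y s y := by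
    intro y hy s hs
    simp only [hZdef, if_pos hy, hπeq s hs]
  -- Lipschitz estimate on Y along [0,1] for good y
  have hYlip : ∀ y ∈ G, ∀ a c : ℝ, 0 ≤ a → a ≤ c → c ≤ 1 →
      ‖Y c y - Y a y‖ ≤ Cv * (c - a) := by
    intro y hy a c ha hac hc
    rw [(hGprop y hy).2 a c ha hac hc]
    calc ‖∫ r in a..c, v (Y r y)‖ ≤ Cv * |c - a| :=
          intervalIntegral.norm_integral_le_of_norm_le_const fun r _ => hvbdd _
      _ = Cv * (c - a) := by rw [abs_of_nonneg (by linarith)]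
  have hZcont : ∀ y, Continuous fun s => Z s y := by
    intro y
    by_cases hy : y ∈ G
    · simp only [hZdef, if_pos hy]
      refine LipschitzWith.continuous (K := Real.toNNReal Cv)
        (LipschitzWith.of_dist_le_mul fun p q => ?_)
      rw [Real.coe_toNNReal _ hCv0, dist_eq_norm, dist_eq_norm]
      rcases le_total (π p) (π q) with h | h
      · rw [norm_sub_rev]
        calc ‖Y (π q) y - Y (π p) y‖ ≤ Cv * (π q - π p) :=
              hYlip y hy _ _ (hπmem p).1 h (hπmem q).2
          _ ≤ Cv * ‖p - q‖ := by
              apply mul_le_mul_of_nonneg_left _ hCv0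
              have := hπlip.dist_le_mul q p
              rw [dist_eq_norm, dist_eq_norm] at this
              calc π q - π p ≤ ‖π q - π p‖ := le_abs_self _
                _ ≤ ‖q - p‖ := by simpa using this
                _ = ‖p - q‖ := norm_sub_rev _ _
      · calc ‖Y (π p) y - Y (π q) y‖ ≤ Cv * (π p - π q) :=
              hYlip y hy _ _ (hπmem q).1 h (hπmem p).2
          _ ≤ Cv * ‖p - q‖ := by
              apply mul_le_mul_of_nonneg_left _ hCv0
              have := hπlip.dist_le_mul p q
              rw [dist_eq_norm, dist_eq_norm] at this
              calc π p - π q ≤ ‖π p - π q‖ := le_abs_self _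
                _ ≤ ‖p - q‖ := by simpa using this
    · simp only [hZdef, if_neg hy]
      exact continuous_const
  have hZmeas : ∀ s, Measurable (Z s) := by
    intro s
    simp only [hZdef]
    exact Measurable.ite hGmeas (hYmeas (π s)) measurable_id
  have hjoint : Measurable (Function.uncurry Z) :=
    measurable_uncurry_of_continuous_of_measurable hZcont hZmeas
  -- a Fubini argument
  set B : Set (ℝ × (Fin d → ℝ)) :=
    (Prod.fst ⁻¹' Icc (0:ℝ) 1) ∩ (Function.uncurry Z ⁻¹' N) with hBdef
  have hBmeas : MeasurableSet B :=
    (measurable_fst measurableSet_Icc).inter (hjoint hNmeas)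
  have hsec : ∀ s : ℝ, volume (Prod.mk s ⁻¹' B) = 0 := by
    intro s
    by_cases hs : s ∈ Icc (0:ℝ) 1
    · have hsub : Prod.mk s ⁻¹' B ⊆ M ∪ Y s ⁻¹' N := by
        intro y hy
        by_cases hyG : y ∈ G
        · right
          have hZ : Z s y = Y s y := hZeq y hyG s hs
          have : Z s y ∈ N := hy.2
          rwa [hZ] at this
        · left
          simpa [hGdef, not_not] using hyG
      refine measure_mono_null hsub ?_
      refine le_antisymm ?_ (zero_le)
      calc volume (M ∪ Y s ⁻¹' N) ≤ volume M + volume (Y s ⁻¹' N) := measure_union_le _ _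
        _ ≤ 0 + ENNReal.ofReal C * volume N := add_le_add hMnull.le (hYpush s hs N hNmeas)
        _ = 0 := by rw [hNnull, mul_zero, add_zero]
    · have : Prod.mk s ⁻¹' B = ∅ := by
        ext y
        simp [hBdef, hs]
      simp [this]
  have hB0 : (volume : Measure ℝ).prod (volume : Measure (Fin d → ℝ)) B = 0 :=
    (Measure.measure_prod_null hBmeas).2 (ae_of_all _ hsec)
  have hAmeas : MeasurableSet (Prod.swap ⁻¹' B : Set ((Fin d → ℝ) × ℝ)) :=
    hBmeas.preimage measurable_swap
  have hA0 : (volume : Measure (Fin d → ℝ)).prod (volume : Measure ℝ) (Prod.swap ⁻¹' B) = 0 := by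
    rw [← Measure.prod_swap, Measure.map_apply measurable_swap hAmeas]
    have : Prod.swap ⁻¹' (Prod.swap ⁻¹' B : Set ((Fin d → ℝ) × ℝ)) = B := by
      ext p; simp
    rw [this]
    exact hB0
  have hae := (Measure.measure_prod_null hAmeas).1 hA0
  -- main argument
  filter_upwards [hGfull, hae] with y hyG hyA
  -- the time-section of the bad set is null
  have hyA' : volume {s : ℝ | (s, y) ∈ B} = 0 := hyA
  set g : ℝ → (Fin d → ℝ) := fun r => v (Z r y) with hgdef
  have hgmeas : Measurable g := hvmeas.comp (hZcont y).measurable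
  have hgloc : LocallyIntegrable g volume := by
    intro x
    refine ⟨closedBall x 1, closedBall_mem_nhds x one_pos, ?_⟩
    refine Integrable.mono' (g := fun _ => Cv)
      (integrableOn_const ?_) hgmeas.aestronglyMeasurable.restrict
      (ae_of_all _ fun r => hvbdd _)
    rw [Real.volume_closedBall]
    exact ENNReal.ofReal_ne_top
  have hφid : ∀ a c : ℝ, 0 ≤ a → a ≤ c → c ≤ 1 →
      (fun s => Z s y) c - (fun s => Z s y) a = ∫ r in a..c, g r := by
    intro a c ha hac hc
    have h1 : Z c y = Y c y := hZeq y hyG c ⟨le_trans ha hac, hc⟩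
    have h2 : Z a y = Y a y := hZeq y hyG a ⟨ha, le_trans hac hc⟩
    show Z c y - Z a y = _
    rw [h1, h2, (hGprop y hyG).2 a c ha hac hc]
    refine intervalIntegral.integral_congr fun r hr => ?_
    rw [uIcc_of_le hac] at hr
    have hr01 : r ∈ Icc (0:ℝ) 1 := ⟨le_trans ha hr.1, le_trans hr.2 hc⟩
    simp only [hgdef, hZeq y hyG r hr01]
  have hftc := ae_ftc_aux hgloc (fun s => Z s y) hφid
  have hIoo : ∀ᵐ s ∂(volume.restrict (Icc (0:ℝ) 1)), s ∈ Ioo (0:ℝ) 1 := by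
    rw [← Measure.restrict_congr_set Ioo_ae_eq_Icc]
    exact ae_restrict_mem measurableSet_Ioo
  have hZN : ∀ᵐ s ∂(volume.restrict (Icc (0:ℝ) 1)), Z s y ∉ N := by
    rw [ae_iff]
    have hm : MeasurableSet {s : ℝ | Z s y ∈ N} := (hZcont y).measurable hNmeas
    have hset : {s : ℝ | ¬ Z s y ∉ N} = {s : ℝ | Z s y ∈ N} := by
      ext s; simp [not_not]
    rw [hset, Measure.restrict_apply hm]
    refine le_antisymm (le_trans (measure_mono ?_) hyA'.le) (zero_le)
    intro s hs
    exact ⟨hs.2, hs.1⟩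
  filter_upwards [hIoo, hZN, hftc] with s hs1 hs2 hs3
  have hs01 : s ∈ Icc (0:ℝ) 1 := Ioo_subset_Icc_self hs1
  have hprop : DifferentiableAt ℝ (X t) (Z s y) ∧
      fderiv ℝ (X t) (Z s y) (v (Z s y)) = v (X t (Z s y)) := by
    by_contra h
    exact hs2 (hNsub h)
  have hcomp : HasDerivAt (fun r => X t (Z r y)) (v (X t (Z s y))) s := by
    have := hprop.1.hasFDerivAt.comp_hasDerivAt s hs3
    rwa [hprop.2] at this
  have hZsY : Z s y = Y s y := hZeq y hyG s hs01
  have heq : (fun r => X t (Y r y)) =ᶠ[𝓝 s] (fun r => X t (Z r y)) := by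
    filter_upwards [isOpen_Ioo.mem_nhds hs1] with r hr
    rw [hZeq y hyG r (Ioo_subset_Icc_self hr)]
  have := hcomp.congr_of_eventuallyEq heq
  rwa [hZsY] at this
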